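/- Let T be a complex symmetric trace-free 3×3 matrix and ξ ∈ ℂ³ a nonzero vector. If for all indices i,j,k ∈ {1,2,3} one has (1/3)(T_{ij}ξ_k + T_{ik}ξ_j + T_{jk}ξ_i) − (2/15)(Σ_l T_{lk}ξ_l δ_{ij} + Σ_l T_{lj}ξ_l δ_{ik} + Σ_l T_{li}ξ_l δ_{jk}) = 0, then T = 0. (ℂ-ellipticity of the symmetric trace-free gradient on symmetric trace-free matrix fields in dimension 3.) -/
import Mathlib

open Finset

private lemma stf_aux (a b c d e f x y z : ℂ)
    (hne : x ≠ 0 ∨ y ≠ 0 ∨ z ≠ 0)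
    (H000 : a*x + a*x + a*x = (2/5)*((a*x+b*y+c*z) + (a*x+b*y+c*z) + (a*x+b*y+c*z)))
    (H001 : a*y + b*x + b*x = (2/5)*((b*x+d*y+e*z)))
    (H002 : a*z + c*x + c*x = (2/5)*((c*x+e*y+f*z)))
    (H011 : b*y + b*y + d*x = (2/5)*((a*x+b*y+c*z)))
    (H012 : b*z + c*y + e*x = 0)
    (H022 : c*z + c*z + f*x = (2/5)*((a*x+b*y+c*z)))
    (H111 : d*y + d*y + d*y = (2/5)*((b*x+d*y+e*z) + (b*x+d*y+e*z) + (b*x+d*y+e*z)))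
    (H112 : d*z + e*y + e*y = (2/5)*((c*x+e*y+f*z)))
    (H122 : e*z + e*z + f*y = (2/5)*((b*x+d*y+e*z)))
    (H222 : f*z + f*z + f*z = (2/5)*((c*x+e*y+f*z) + (c*x+e*y+f*z) + (c*x+e*y+f*z))) :
    a = 0 ∧ b = 0 ∧ c = 0 ∧ d = 0 ∧ e = 0 ∧ f = 0 := by
  have E30 : 8*(x^2+y^2+z^2)*(a*x+b*y+c*z) + (x*(a*x+b*y+c*z)+y*(b*x+d*y+e*z)+z*(c*x+e*y+f*z))*x = 0 := by
    linear_combination 5*x^2*H000 + 10*x*y*H001 + 10*x*z*H002 + 5*y^2*H011 + 10*y*z*H012 + 5*z^2*H022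
  have E31 : 8*(x^2+y^2+z^2)*(b*x+d*y+e*z) + (x*(a*x+b*y+c*z)+y*(b*x+d*y+e*z)+z*(c*x+e*y+f*z))*y = 0 := by
    linear_combination 5*x^2*H001 + 10*x*y*H011 + 10*x*z*H012 + 5*y^2*H111 + 10*y*z*H112 + 5*z^2*H122
  have E32 : 8*(x^2+y^2+z^2)*(c*x+e*y+f*z) + (x*(a*x+b*y+c*z)+y*(b*x+d*y+e*z)+z*(c*x+e*y+f*z))*z = 0 := by
    linear_combination 5*x^2*H002 + 10*x*y*H012 + 10*x*z*H022 + 5*y^2*H112 + 10*y*z*H122 + 5*z^2*H222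
  have hvs : (a*x+b*y+c*z) = 0 ∧ (b*x+d*y+e*z) = 0 ∧ (c*x+e*y+f*z) = 0 := by
    rcases eq_or_ne (x^2+y^2+z^2) 0 with hq | hq
    · have hS : (x*(a*x+b*y+c*z)+y*(b*x+d*y+e*z)+z*(c*x+e*y+f*z)) = 0 := by
        rcases hne with hx | hy | hz
        · have hsx : (x*(a*x+b*y+c*z)+y*(b*x+d*y+e*z)+z*(c*x+e*y+f*z))*x = 0 := by linear_combination E30 - 8*(a*x+b*y+c*z)*hq
          exact (mul_eq_zero.mp hsx).resolve_right hx
        · have hsx : (x*(a*x+b*y+c*z)+y*(b*x+d*y+e*z)+z*(c*x+e*y+f*z))*y = 0 := by linear_combination E31 - 8*(b*x+d*y+e*z)*hq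
          exact (mul_eq_zero.mp hsx).resolve_right hy
        · have hsx : (x*(a*x+b*y+c*z)+y*(b*x+d*y+e*z)+z*(c*x+e*y+f*z))*z = 0 := by linear_combination E32 - 8*(c*x+e*y+f*z)*hq
          exact (mul_eq_zero.mp hsx).resolve_right hz
      rcases hne with hx | hy | hz
      · have Fmm : (a*x+b*y+c*z)*x + (a*x+b*y+c*z)*x = 0 := by linear_combination (5/3)*x*H000 + (5/3)*y*H001 + (5/3)*z*H002 - (5/3)*a*hq + (2/3)*hS
        have hvm : (a*x+b*y+c*z) = 0 := by
          have h' : (a*x+b*y+c*z)*(2*x) = 0 := by linear_combination Fmm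
          exact (mul_eq_zero.mp h').resolve_right (mul_ne_zero two_ne_zero hx)
        have F01 : (a*x+b*y+c*z)*y + (b*x+d*y+e*z)*x = 0 := by linear_combination (5/3)*x*H001 + (5/3)*y*H011 + (5/3)*z*H012 - (5/3)*b*hq
        have hv1 : (b*x+d*y+e*z) = 0 := by
          have h' : (b*x+d*y+e*z)*x = 0 := by linear_combination F01 - y*hvm
          exact (mul_eq_zero.mp h').resolve_right hx
        have F02 : (a*x+b*y+c*z)*z + (c*x+e*y+f*z)*x = 0 := by linear_combination (5/3)*x*H002 + (5/3)*y*H012 + (5/3)*z*H022 - (5/3)*c*hq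
        have hv2 : (c*x+e*y+f*z) = 0 := by
          have h' : (c*x+e*y+f*z)*x = 0 := by linear_combination F02 - z*hvm
          exact (mul_eq_zero.mp h').resolve_right hx
        exact ⟨hvm, hv1, hv2⟩
      · have Fmm : (b*x+d*y+e*z)*y + (b*x+d*y+e*z)*y = 0 := by linear_combination (5/3)*x*H011 + (5/3)*y*H111 + (5/3)*z*H112 - (5/3)*d*hq + (2/3)*hS
        have hvm : (b*x+d*y+e*z) = 0 := by
          have h' : (b*x+d*y+e*z)*(2*y) = 0 := by linear_combination Fmm
          exact (mul_eq_zero.mp h').resolve_right (mul_ne_zero two_ne_zero hy)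
        have F01 : (a*x+b*y+c*z)*y + (b*x+d*y+e*z)*x = 0 := by linear_combination (5/3)*x*H001 + (5/3)*y*H011 + (5/3)*z*H012 - (5/3)*b*hq
        have hv0 : (a*x+b*y+c*z) = 0 := by
          have h' : (a*x+b*y+c*z)*y = 0 := by linear_combination F01 - x*hvm
          exact (mul_eq_zero.mp h').resolve_right hy
        have F12 : (b*x+d*y+e*z)*z + (c*x+e*y+f*z)*y = 0 := by linear_combination (5/3)*x*H012 + (5/3)*y*H112 + (5/3)*z*H122 - (5/3)*e*hq
        have hv2 : (c*x+e*y+f*z) = 0 := by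
          have h' : (c*x+e*y+f*z)*y = 0 := by linear_combination F12 - z*hvm
          exact (mul_eq_zero.mp h').resolve_right hy
        exact ⟨hv0, hvm, hv2⟩
      · have Fmm : (c*x+e*y+f*z)*z + (c*x+e*y+f*z)*z = 0 := by linear_combination (5/3)*x*H022 + (5/3)*y*H122 + (5/3)*z*H222 - (5/3)*f*hq + (2/3)*hS
        have hvm : (c*x+e*y+f*z) = 0 := by
          have h' : (c*x+e*y+f*z)*(2*z) = 0 := by linear_combination Fmm
          exact (mul_eq_zero.mp h').resolve_right (mul_ne_zero two_ne_zero hz)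
        have F02 : (a*x+b*y+c*z)*z + (c*x+e*y+f*z)*x = 0 := by linear_combination (5/3)*x*H002 + (5/3)*y*H012 + (5/3)*z*H022 - (5/3)*c*hq
        have hv0 : (a*x+b*y+c*z) = 0 := by
          have h' : (a*x+b*y+c*z)*z = 0 := by linear_combination F02 - x*hvm
          exact (mul_eq_zero.mp h').resolve_right hz
        have F12 : (b*x+d*y+e*z)*z + (c*x+e*y+f*z)*y = 0 := by linear_combination (5/3)*x*H012 + (5/3)*y*H112 + (5/3)*z*H122 - (5/3)*e*hq
        have hv1 : (b*x+d*y+e*z) = 0 := by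
          have h' : (b*x+d*y+e*z)*z = 0 := by linear_combination F12 - y*hvm
          exact (mul_eq_zero.mp h').resolve_right hz
        exact ⟨hv0, hv1, hvm⟩
    · have e4 : (x^2+y^2+z^2)*(x*(a*x+b*y+c*z)+y*(b*x+d*y+e*z)+z*(c*x+e*y+f*z))*9 = 0 := by linear_combination x*E30 + y*E31 + z*E32
      have hS : (x*(a*x+b*y+c*z)+y*(b*x+d*y+e*z)+z*(c*x+e*y+f*z)) = 0 := by
        rcases mul_eq_zero.mp e4 with h' | h'
        · exact (mul_eq_zero.mp h').resolve_left hq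
        · exact absurd h' (by norm_num)
      have hv0 : (a*x+b*y+c*z) = 0 := by
        have h' : (x^2+y^2+z^2)*((a*x+b*y+c*z)*8) = 0 := by linear_combination E30 - x*hS
        exact (mul_eq_zero.mp ((mul_eq_zero.mp h').resolve_left hq)).resolve_right (by norm_num)
      have hv1 : (b*x+d*y+e*z) = 0 := by
        have h' : (x^2+y^2+z^2)*((b*x+d*y+e*z)*8) = 0 := by linear_combination E31 - y*hS
        exact (mul_eq_zero.mp ((mul_eq_zero.mp h').resolve_left hq)).resolve_right (by norm_num)
      have hv2 : (c*x+e*y+f*z) = 0 := by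
        have h' : (x^2+y^2+z^2)*((c*x+e*y+f*z)*8) = 0 := by linear_combination E32 - z*hS
        exact (mul_eq_zero.mp ((mul_eq_zero.mp h').resolve_left hq)).resolve_right (by norm_num)
      exact ⟨hv0, hv1, hv2⟩
  obtain ⟨hv0, hv1, hv2⟩ := hvs
  rcases hne with hx | hy | hz
  · have ha : a = 0 := by
      have h' : a*(3*x) = 0 := by linear_combination H000 + (6/5)*hv0
      exact (mul_eq_zero.mp h').resolve_right (mul_ne_zero (by norm_num) hx)
    have hb : b = 0 := by
      have h' : b*(2*x) = 0 := by linear_combination H001 + (2/5)*hv1 - y*ha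
      exact (mul_eq_zero.mp h').resolve_right (mul_ne_zero two_ne_zero hx)
    have hc : c = 0 := by
      have h' : c*(2*x) = 0 := by linear_combination H002 + (2/5)*hv2 - z*ha
      exact (mul_eq_zero.mp h').resolve_right (mul_ne_zero two_ne_zero hx)
    have hd : d = 0 := by
      have h' : d*x = 0 := by linear_combination H011 + (2/5)*hv0 - 2*y*hb
      exact (mul_eq_zero.mp h').resolve_right hx
    have he : e = 0 := by
      have h' : e*x = 0 := by linear_combination H012 - z*hb - y*hc
      exact (mul_eq_zero.mp h').resolve_right hx
    have hf : f = 0 := by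
      have h' : f*x = 0 := by linear_combination H022 + (2/5)*hv0 - 2*z*hc
      exact (mul_eq_zero.mp h').resolve_right hx
    exact ⟨ha, hb, hc, hd, he, hf⟩
  · have hd : d = 0 := by
      have h' : d*(3*y) = 0 := by linear_combination H111 + (6/5)*hv1
      exact (mul_eq_zero.mp h').resolve_right (mul_ne_zero (by norm_num) hy)
    have hb : b = 0 := by
      have h' : b*(2*y) = 0 := by linear_combination H011 + (2/5)*hv0 - x*hd
      exact (mul_eq_zero.mp h').resolve_right (mul_ne_zero two_ne_zero hy)
    have he : e = 0 := by
      have h' : e*(2*y) = 0 := by linear_combination H112 + (2/5)*hv2 - z*hd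
      exact (mul_eq_zero.mp h').resolve_right (mul_ne_zero two_ne_zero hy)
    have ha : a = 0 := by
      have h' : a*y = 0 := by linear_combination H001 + (2/5)*hv1 - 2*x*hb
      exact (mul_eq_zero.mp h').resolve_right hy
    have hf : f = 0 := by
      have h' : f*y = 0 := by linear_combination H122 + (2/5)*hv1 - 2*z*he
      exact (mul_eq_zero.mp h').resolve_right hy
    have hc : c = 0 := by
      have h' : c*y = 0 := by linear_combination H012 - z*hb - x*he
      exact (mul_eq_zero.mp h').resolve_right hy
    exact ⟨ha, hb, hc, hd, he, hf⟩
  · have hf : f = 0 := by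
      have h' : f*(3*z) = 0 := by linear_combination H222 + (6/5)*hv2
      exact (mul_eq_zero.mp h').resolve_right (mul_ne_zero (by norm_num) hz)
    have hc : c = 0 := by
      have h' : c*(2*z) = 0 := by linear_combination H022 + (2/5)*hv0 - x*hf
      exact (mul_eq_zero.mp h').resolve_right (mul_ne_zero two_ne_zero hz)
    have he : e = 0 := by
      have h' : e*(2*z) = 0 := by linear_combination H122 + (2/5)*hv1 - y*hf
      exact (mul_eq_zero.mp h').resolve_right (mul_ne_zero two_ne_zero hz)
    have ha : a = 0 := by
      have h' : a*z = 0 := by linear_combination H002 + (2/5)*hv2 - 2*x*hc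
      exact (mul_eq_zero.mp h').resolve_right hz
    have hd : d = 0 := by
      have h' : d*z = 0 := by linear_combination H112 + (2/5)*hv2 - 2*y*he
      exact (mul_eq_zero.mp h').resolve_right hz
    have hb : b = 0 := by
      have h' : b*z = 0 := by linear_combination H012 - y*hc - x*he
      exact (mul_eq_zero.mp h').resolve_right hz
    exact ⟨ha, hb, hc, hd, he, hf⟩

/-- ℂ-ellipticity of the symmetric trace-free gradient on symmetric trace-free
3×3 matrix fields: the vanishing of the complex symbol forces `T = 0`. -/
theorem stmt1 (T : Matrix (Fin 3) (Fin 3) ℂ) (hsym : T.IsSymm)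
    (htr : Matrix.trace T = 0) (ξ : Fin 3 → ℂ) (hξ : ξ ≠ 0)
    (h : ∀ i j k : Fin 3,
      (1/3 : ℂ) * (T i j * ξ k + T i k * ξ j + T j k * ξ i)
        - (2/15 : ℂ) * ((∑ l, T l k * ξ l) * (if i = j then (1:ℂ) else 0)
          + (∑ l, T l j * ξ l) * (if i = k then (1:ℂ) else 0)
          + (∑ l, T l i * ξ l) * (if j = k then (1:ℂ) else 0)) = 0) :
    T = 0 := by
  have e10 : T 1 0 = T 0 1 := by
    have := congrFun (congrFun hsym 0) 1; simpa using this
  have e20 : T 2 0 = T 0 2 := by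
    have := congrFun (congrFun hsym 0) 2; simpa using this
  have e21 : T 2 1 = T 1 2 := by
    have := congrFun (congrFun hsym 1) 2; simpa using this
  have hne : ξ 0 ≠ 0 ∨ ξ 1 ≠ 0 ∨ ξ 2 ≠ 0 := by
    by_contra hcon
    push_neg at hcon
    exact hξ (funext fun i => by fin_cases i <;> simp [hcon.1, hcon.2.1, hcon.2.2])
  have H000 : (T 0 0)*(ξ 0) + (T 0 0)*(ξ 0) + (T 0 0)*(ξ 0) = (2/5)*(((T 0 0)*(ξ 0)+(T 0 1)*(ξ 1)+(T 0 2)*(ξ 2)) + ((T 0 0)*(ξ 0)+(T 0 1)*(ξ 1)+(T 0 2)*(ξ 2)) + ((T 0 0)*(ξ 0)+(T 0 1)*(ξ 1)+(T 0 2)*(ξ 2))) := by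
    have hh := h 0 0 0
    simp only [Fin.sum_univ_three, e10, e20, e21, Fin.reduceEq, reduceIte] at hh
    linear_combination 3*hh
  have H001 : (T 0 0)*(ξ 1) + (T 0 1)*(ξ 0) + (T 0 1)*(ξ 0) = (2/5)*(((T 0 1)*(ξ 0)+(T 1 1)*(ξ 1)+(T 1 2)*(ξ 2))) := by
    have hh := h 0 0 1
    simp only [Fin.sum_univ_three, e10, e20, e21, Fin.reduceEq, reduceIte] at hh
    linear_combination 3*hh
  have H002 : (T 0 0)*(ξ 2) + (T 0 2)*(ξ 0) + (T 0 2)*(ξ 0) = (2/5)*(((T 0 2)*(ξ 0)+(T 1 2)*(ξ 1)+(T 2 2)*(ξ 2))) := by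
    have hh := h 0 0 2
    simp only [Fin.sum_univ_three, e10, e20, e21, Fin.reduceEq, reduceIte] at hh
    linear_combination 3*hh
  have H011 : (T 0 1)*(ξ 1) + (T 0 1)*(ξ 1) + (T 1 1)*(ξ 0) = (2/5)*(((T 0 0)*(ξ 0)+(T 0 1)*(ξ 1)+(T 0 2)*(ξ 2))) := by
    have hh := h 0 1 1
    simp only [Fin.sum_univ_three, e10, e20, e21, Fin.reduceEq, reduceIte] at hh
    linear_combination 3*hh
  have H012 : (T 0 1)*(ξ 2) + (T 0 2)*(ξ 1) + (T 1 2)*(ξ 0) = 0 := by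
    have hh := h 0 1 2
    simp only [Fin.sum_univ_three, e10, e20, e21, Fin.reduceEq, reduceIte] at hh
    linear_combination 3*hh
  have H022 : (T 0 2)*(ξ 2) + (T 0 2)*(ξ 2) + (T 2 2)*(ξ 0) = (2/5)*(((T 0 0)*(ξ 0)+(T 0 1)*(ξ 1)+(T 0 2)*(ξ 2))) := by
    have hh := h 0 2 2
    simp only [Fin.sum_univ_three, e10, e20, e21, Fin.reduceEq, reduceIte] at hh
    linear_combination 3*hh
  have H111 : (T 1 1)*(ξ 1) + (T 1 1)*(ξ 1) + (T 1 1)*(ξ 1) = (2/5)*(((T 0 1)*(ξ 0)+(T 1 1)*(ξ 1)+(T 1 2)*(ξ 2)) + ((T 0 1)*(ξ 0)+(T 1 1)*(ξ 1)+(T 1 2)*(ξ 2)) + ((T 0 1)*(ξ 0)+(T 1 1)*(ξ 1)+(T 1 2)*(ξ 2))) := by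
    have hh := h 1 1 1
    simp only [Fin.sum_univ_three, e10, e20, e21, Fin.reduceEq, reduceIte] at hh
    linear_combination 3*hh
  have H112 : (T 1 1)*(ξ 2) + (T 1 2)*(ξ 1) + (T 1 2)*(ξ 1) = (2/5)*(((T 0 2)*(ξ 0)+(T 1 2)*(ξ 1)+(T 2 2)*(ξ 2))) := by
    have hh := h 1 1 2
    simp only [Fin.sum_univ_three, e10, e20, e21, Fin.reduceEq, reduceIte] at hh
    linear_combination 3*hh
  have H122 : (T 1 2)*(ξ 2) + (T 1 2)*(ξ 2) + (T 2 2)*(ξ 1) = (2/5)*(((T 0 1)*(ξ 0)+(T 1 1)*(ξ 1)+(T 1 2)*(ξ 2))) := by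
    have hh := h 1 2 2
    simp only [Fin.sum_univ_three, e10, e20, e21, Fin.reduceEq, reduceIte] at hh
    linear_combination 3*hh
  have H222 : (T 2 2)*(ξ 2) + (T 2 2)*(ξ 2) + (T 2 2)*(ξ 2) = (2/5)*(((T 0 2)*(ξ 0)+(T 1 2)*(ξ 1)+(T 2 2)*(ξ 2)) + ((T 0 2)*(ξ 0)+(T 1 2)*(ξ 1)+(T 2 2)*(ξ 2)) + ((T 0 2)*(ξ 0)+(T 1 2)*(ξ 1)+(T 2 2)*(ξ 2))) := by
    have hh := h 2 2 2
    simp only [Fin.sum_univ_three, e10, e20, e21, Fin.reduceEq, reduceIte] at hh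
    linear_combination 3*hh
  obtain ⟨ha, hb, hc, hd, he, hf⟩ :=
    stf_aux (T 0 0) (T 0 1) (T 0 2) (T 1 1) (T 1 2) (T 2 2) (ξ 0) (ξ 1) (ξ 2) hne H000 H001 H002 H011 H012 H022 H111 H112 H122 H222
  ext i j
  fin_cases i <;> fin_cases j <;>
    simp [ha, hb, hc, hd, he, hf, e10, e20, e21]
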